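/- (Transposition principle counting identity, special case) If computing the linear map x ↦ x·M for an i×j matrix M without zero rows or columns can be done with a straight-line program using a(M) additions over F_2, then there is a straight-line program computing v ↦ v·M^T using a(M) + j − i additions. -/

import Mathlib

/-- The standard basis of `F_2^n`, i.e. the linear forms given by the `n` input bits. -/
def inputForms (n : ℕ) : List (Fin n → ZMod 2) :=
  (List.finRange n).map (fun i => fun t => if t = i then (1 : ZMod 2) else 0)

/-- The list of all values (linear forms over the `n` input bits) computed by a
straight-line XOR program: the inputs, followed by the outputs of the 2-input XOR
gates, each gate referring to two previously computed values by index. -/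
def values (n : ℕ) (gates : List (ℕ × ℕ)) : List (Fin n → ZMod 2) :=
  gates.foldl (fun acc g => acc ++ [acc.getD g.1 0 + acc.getD g.2 0]) (inputForms n)

/-- Validity of a straight-line program: each gate reads only previously computed
values (inputs or earlier gate outputs). -/
def ValidGates (n : ℕ) (gates : List (ℕ × ℕ)) : Prop :=
  ∀ i < gates.length, (gates.getD i (0, 0)).1 < n + i ∧ (gates.getD i (0, 0)).2 < n + i

/-- The outputs of the gates (the computed values other than the inputs). -/
def gateOutputs (n : ℕ) (gates : List (ℕ × ℕ)) : List (Fin n → ZMod 2) :=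
  (values n gates).drop n

/-- Hamming weight of a linear form (vector of coefficients over `F_2`). -/
def wt {n : ℕ} (v : Fin n → ZMod 2) : ℕ :=
  (Finset.univ.filter fun i => v i ≠ 0).card

/-- Transposition principle (counting identity, over `F_2`): if a straight-line XOR
program with `g` gates computes `x ↦ x·M` for an `i×j` matrix `M` with no zero row and
no zero column (every column of `M`, as a linear form in the `i` inputs, appears among
the computed values), then some straight-line XOR program with at most `g + j − i`
gates computes `v ↦ v·Mᵀ`. -/
-- ===== auxiliary lemmas =====
lemma sum_flatMap {α : Type*} [AddCommMonoid α] (l : List ℕ) (f : ℕ → List α) :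
    (l.flatMap f).sum = (l.map (fun a => (f a).sum)).sum := by
  induction l with
  | nil => simp
  | cons a l ih => simp [ih]
lemma values_nil (n : ℕ) : values n [] = inputForms n := rfl

lemma foldl_acc_len (G : List (ℕ × ℕ)) :
    ∀ acc : List (Fin n → ZMod 2),
      (G.foldl (fun acc g => acc ++ [acc.getD g.1 0 + acc.getD g.2 0]) acc).length
        = acc.length + G.length := by
  induction G with
  | nil => simp
  | cons p G ih => intro acc; rw [List.foldl_cons, ih]; simp; omega

lemma values_length (n : ℕ) (G : List (ℕ × ℕ)) : (values n G).length = n + G.length := by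
  rw [values, foldl_acc_len]; simp [inputForms]

lemma foldl_acc_prefix (G : List (ℕ × ℕ)) :
    ∀ acc : List (Fin n → ZMod 2),
      acc <+: (G.foldl (fun acc g => acc ++ [acc.getD g.1 0 + acc.getD g.2 0]) acc) := by
  induction G with
  | nil => intro acc; simp
  | cons p G ih => intro acc; rw [List.foldl_cons]
                   exact (List.prefix_append _ _).trans (ih _)

lemma values_append (n : ℕ) (G E : List (ℕ × ℕ)) :
    values n G <+: values n (G ++ E) := by
  rw [values, values, List.foldl_append]; exact foldl_acc_prefix E _

lemma mem_values_mono {n : ℕ} {G E : List (ℕ × ℕ)} {x : Fin n → ZMod 2}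
    (h : x ∈ values n G) : x ∈ values n (G ++ E) :=
  (values_append n G E).subset h

lemma inputForms_prefix (n : ℕ) (G : List (ℕ × ℕ)) : inputForms n <+: values n G :=
  foldl_acc_prefix G _

lemma e_mem (n : ℕ) (G : List (ℕ × ℕ)) (c : Fin n) :
    (fun t => if t = c then (1 : ZMod 2) else 0) ∈ values n G := by
  apply (inputForms_prefix n G).subset
  simp [inputForms]

lemma values_concat (n : ℕ) (G : List (ℕ × ℕ)) (p : ℕ × ℕ) :
    values n (G ++ [p]) = values n G ++ [(values n G).getD p.1 0 + (values n G).getD p.2 0] := by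
  rw [values, List.foldl_append]; rfl

lemma valid_concat {n : ℕ} {G : List (ℕ × ℕ)} {p : ℕ × ℕ} (hG : ValidGates n G)
    (h1 : p.1 < n + G.length) (h2 : p.2 < n + G.length) : ValidGates n (G ++ [p]) := by
  intro t ht
  simp only [List.length_append, List.length_singleton] at ht
  rcases lt_or_ge t G.length with h | h
  · rw [List.getD_append _ _ _ _ h]; exact ⟨(hG t h).1.trans_le (by omega), (hG t h).2.trans_le (by omega)⟩
  · have : t = G.length := by omega
    subst this
    rw [List.getD_append_right _ _ _ _ le_rfl]
    simpa using ⟨h1, h2⟩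

lemma valid_prefix {n : ℕ} {G E : List (ℕ × ℕ)} (h : ValidGates n (G ++ E)) : ValidGates n G := by
  intro t ht
  have := h t (by simp; omega)
  rwa [List.getD_append _ _ _ _ ht] at this

lemma values_getD_input {n : ℕ} (G : List (ℕ × ℕ)) (r : Fin n) :
    (values n G).getD r 0 = fun t => if t = r then (1 : ZMod 2) else 0 := by
  obtain ⟨tail, htail⟩ := inputForms_prefix n G
  rw [← htail, List.getD_append]
  · rw [inputForms]
    rw [List.getD_eq_getElem _ _ (by simp [r.2])]
    simp
  · simp [inputForms, r.2]

lemma values_gate_eq {n : ℕ} (G : List (ℕ × ℕ)) (hG : ValidGates n G) :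
    ∀ t < G.length, (values n G).getD (n + t) 0 =
      (values n G).getD (G.getD t (0,0)).1 0 + (values n G).getD (G.getD t (0,0)).2 0 := by
  induction G using List.reverseRecOn with
  | nil => simp
  | append_singleton G p ih =>
    intro t ht
    simp only [List.length_append, List.length_singleton] at ht
    have hGv : ValidGates n G := valid_prefix hG
    rw [values_concat]
    rcases lt_or_ge t G.length with h | h
    · have hg : (G ++ [p]).getD t (0,0) = G.getD t (0,0) := List.getD_append _ _ _ _ h
      rw [hg]
      have hlt : n + t < (values n G).length := by rw [values_length]; omega
      have h1 : (G.getD t (0,0)).1 < (values n G).length := by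
        rw [values_length]; have := (hGv t h).1; omega
      have h2 : (G.getD t (0,0)).2 < (values n G).length := by
        rw [values_length]; have := (hGv t h).2; omega
      rw [List.getD_append _ _ _ _ hlt, List.getD_append _ _ _ _ h1, List.getD_append _ _ _ _ h2]
      exact ih hGv t h
    · have : t = G.length := by omega
      subst this
      have hg : (G ++ [p]).getD G.length (0,0) = p := by
        rw [List.getD_append_right _ _ _ _ le_rfl]; simp
      rw [hg]
      have hp := hG G.length (by simp)
      rw [hg] at hp
      have h1 : p.1 < (values n G).length := by rw [values_length]; omega
      have h2 : p.2 < (values n G).length := by rw [values_length]; omega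
      rw [List.getD_append_right _ _ _ _ (by rw [values_length])]
      rw [values_length, List.getD_append _ _ _ _ h1, List.getD_append _ _ _ _ h2]
      simp

lemma sumExtend {n : ℕ} : ∀ (len : ℕ) (L : List (Fin n → ZMod 2)) (G : List (ℕ × ℕ)),
    L.length = len + 1 → ValidGates n G → (∀ x ∈ L, x ∈ values n G) →
    ∃ extra : List (ℕ × ℕ), ValidGates n (G ++ extra) ∧ extra.length = len ∧
      L.sum ∈ values n (G ++ extra) := by
  intro len
  induction len with
  | zero =>
    intro L G hlen _ hmem
    match L, hlen with
    | [x], _ =>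
      exact ⟨[], by simpa using ‹ValidGates n G›, rfl, by simpa using hmem x (by simp)⟩
  | succ m ih =>
    intro L G hlen hG hmem
    match L, hlen with
    | x :: y :: rest, hlen =>
      set ix := (values n G).idxOf x with hix
      set iy := (values n G).idxOf y with hiy
      have hxmem : x ∈ values n G := hmem x (by simp)
      have hymem : y ∈ values n G := hmem y (by simp)
      have hix_lt : ix < (values n G).length := List.idxOf_lt_length_iff.mpr hxmem
      have hiy_lt : iy < (values n G).length := List.idxOf_lt_length_iff.mpr hymem
      set G1 := G ++ [(ix, iy)] with hG1
      have hvG1 : ValidGates n G1 := by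
        apply valid_concat hG <;> simp only [] <;> rw [← values_length n G] <;> assumption
      have hval : values n G1 = values n G ++ [x + y] := by
        rw [hG1, values_concat]
        congr 2
        simp only []
        rw [List.getD_eq_getElem _ _ hix_lt, List.getD_eq_getElem _ _ hiy_lt,
          List.getElem_idxOf, List.getElem_idxOf]
      have hxy : x + y ∈ values n G1 := by rw [hval]; simp
      have hrest : ∀ z ∈ (x + y) :: rest, z ∈ values n G1 := by
        intro z hz
        rcases List.mem_cons.mp hz with rfl | hz
        · exact hxy
        · exact mem_values_mono (hmem z (by simp [hz]))
      obtain ⟨extra1, hv1, hlen1, hsum1⟩ := ih ((x + y) :: rest) G1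
        (by simp at hlen ⊢; omega) hvG1 hrest
      rw [List.append_assoc] at hv1 hsum1
      simp only [List.singleton_append] at hv1 hsum1
      refine ⟨(ix, iy) :: extra1, hv1, by simp [hlen1], ?_⟩
      have hs : (x :: y :: rest).sum = ((x + y) :: rest).sum := by
        simp [add_assoc]
      rw [hs]
      exact hsum1

def hseq (j N : ℕ) (out : Fin j → ℕ) (rd : ℕ → ℕ → ℕ) (k : ℕ) : Fin j → ZMod 2 :=
  (fun c => if out c = k then 1 else 0) +
    ∑ m ∈ Finset.range N, if _h : k < m ∧ m < N then (rd m k : ZMod 2) • hseq j N out rd m else 0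
termination_by N - k
decreasing_by omega

def aliveP (j N : ℕ) (out : Fin j → ℕ) (rd : ℕ → ℕ → ℕ) (k : ℕ) : Prop :=
  (∃ c, out c = k) ∨ ∃ m, ∃ _h : k < m ∧ m < N, rd m k ≠ 0 ∧ aliveP j N out rd m
termination_by N - k
decreasing_by omega

section Core
variable (j N : ℕ) (out : Fin j → ℕ) (rd : ℕ → ℕ → ℕ)

lemma filter_range_Ico (k : ℕ) :
    (Finset.range N).filter (fun m => k < m ∧ m < N) = Finset.Ico (k+1) N := by
  ext m; simp [Finset.mem_filter, Finset.mem_Ico]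

lemma hseq_eq (k : ℕ) : hseq j N out rd k =
    (fun c => if out c = k then 1 else 0) +
      ∑ m ∈ Finset.Ico (k+1) N, (rd m k : ZMod 2) • hseq j N out rd m := by
  rw [hseq]
  congr 1
  rw [← filter_range_Ico N k, Finset.sum_filter]
  apply Finset.sum_congr rfl
  intro m _
  split <;> simp_all

lemma alive_iff (k : ℕ) : aliveP j N out rd k ↔
    (∃ c, out c = k) ∨ ∃ m, k < m ∧ m < N ∧ rd m k ≠ 0 ∧ aliveP j N out rd m := by
  rw [aliveP]
  constructor
  · rintro (h | ⟨m, hm, h1, h2⟩)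
    · exact Or.inl h
    · exact Or.inr ⟨m, hm.1, hm.2, h1, h2⟩
  · rintro (h | ⟨m, h1, h2, h3, h4⟩)
    · exact Or.inl h
    · exact Or.inr ⟨m, ⟨h1, h2⟩, h3, h4⟩

lemma down_ind (P : ℕ → Prop) (step : ∀ k, (∀ m, k < m → m < N → P m) → P k) : ∀ k, P k := by
  have key : ∀ d k, N - k ≤ d → P k := by
    intro d
    induction d with
    | zero => intro k h; exact step k (fun m hm1 hm2 => by omega)
    | succ d ih => intro k h; exact step k (fun m hm1 hm2 => ih m (by omega))
  exact fun k => key N k (by omega)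

lemma hseq_dead : ∀ k, ¬ aliveP j N out rd k → hseq j N out rd k = 0 := by
  apply down_ind N (P := fun k => ¬ aliveP j N out rd k → hseq j N out rd k = 0)
  intro k ih hdead
  rw [alive_iff] at hdead
  push_neg at hdead
  obtain ⟨h1, h2⟩ := hdead
  rw [hseq_eq]
  have : (fun c => if out c = k then (1:ZMod 2) else 0) = 0 := by
    funext c; simp [h1 c]
  rw [this, zero_add]
  apply Finset.sum_eq_zero
  intro m hm
  rw [Finset.mem_Ico] at hm
  by_cases hrd : rd m k = 0
  · simp [hrd]
  · rw [ih m (by omega) hm.2 (h2 m (by omega) hm.2 hrd)]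
    simp
end Core

lemma hseq_apply_Ico (j N : ℕ) (out : Fin j → ℕ) (rd : ℕ → ℕ → ℕ) (k : ℕ) (c : Fin j) :
    hseq j N out rd k c =
      (if out c = k then 1 else 0) + ∑ m ∈ Finset.Ico (k+1) N, (rd m k : ZMod 2) * hseq j N out rd m c := by
  conv_lhs => rw [hseq_eq]
  rw [Pi.add_apply, Finset.sum_apply]
  simp only [Pi.smul_apply, smul_eq_mul]

section Invariant
variable {W : Type*} [AddCommMonoid W] [Module (ZMod 2) W]

lemma invariant (j N i : ℕ) (out : Fin j → ℕ) (rd : ℕ → ℕ → ℕ) (V : ℕ → W)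
    (hiN : i ≤ N)
    (hrd0 : ∀ m k, rd m k ≠ 0 → k < m ∧ i ≤ m)
    (hV : ∀ m, i ≤ m → m < N → V m = ∑ k ∈ Finset.range m, (rd m k : ZMod 2) • V k)
    (c : Fin j) (hc : out c < N) :
    ∑ k ∈ Finset.range i, (hseq j N out rd k c) • V k = V (out c) := by
  set h : ℕ → ZMod 2 := fun m => hseq j N out rd m c with hh
  set coef : ℕ → ℕ → ZMod 2 := fun k K =>
    (if out c = k then 1 else 0) + ∑ m ∈ Finset.Ico K N, (rd m k : ZMod 2) * h m with hcoef
  have key : ∀ d K, i ≤ K → K + d = N →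
      ∑ k ∈ Finset.range K, coef k K • V k = V (out c) := by
    intro d
    induction d with
    | zero =>
      intro K hK hKN
      have hKN' : K = N := by omega
      rw [hKN']
      have : ∀ k ∈ Finset.range N, coef k N • V k = (if out c = k then (1:ZMod 2) else 0) • V k := by
        intro k _
        rw [hcoef]; simp
      rw [Finset.sum_congr rfl this]
      rw [Finset.sum_eq_single (out c)]
      · simp
      · intro k _ hk
        have : out c ≠ k := fun h => hk h.symm
        rw [if_neg this, zero_smul]
      · intro habs; exact absurd (Finset.mem_range.mpr hc) habs
    | succ d ih =>
      intro K hK hKN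
      have hKN' : K < N := by omega
      have hsplit : ∀ k, coef k K = coef k (K+1) + (rd K k : ZMod 2) * h K := by
        intro k
        rw [hcoef]
        simp only []
        rw [Finset.sum_eq_sum_Ico_succ_bot hKN']
        ring
      have hcoefK : coef K (K+1) = h K := by
        rw [hcoef, hh]
        simp only []
        rw [hseq_apply_Ico]
      calc ∑ k ∈ Finset.range K, coef k K • V k
          = ∑ k ∈ Finset.range K, (coef k (K+1) • V k + ((rd K k : ZMod 2) * h K) • V k) := by
            apply Finset.sum_congr rfl; intro k _; rw [hsplit k, add_smul]
        _ = ∑ k ∈ Finset.range K, coef k (K+1) • V k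
              + ∑ k ∈ Finset.range K, ((rd K k : ZMod 2) * h K) • V k := Finset.sum_add_distrib
        _ = ∑ k ∈ Finset.range K, coef k (K+1) • V k + h K • V K := by
            congr 1
            have : ∀ k ∈ Finset.range K, ((rd K k : ZMod 2) * h K) • V k
                = h K • ((rd K k : ZMod 2) • V k) := by
              intro k _; rw [mul_comm, mul_smul]
            rw [Finset.sum_congr rfl this, ← Finset.smul_sum, ← hV K hK hKN']
        _ = ∑ k ∈ Finset.range (K+1), coef k (K+1) • V k := by
            rw [Finset.sum_range_succ, hcoefK]
        _ = V (out c) := ih (K+1) (by omega) (by omega)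
  have hcoefi : ∀ k, k < i → coef k i = h k := by
    intro k hk
    have hhk : h k = (if out c = k then 1 else 0) +
        ∑ m ∈ Finset.Ico (k+1) N, (rd m k : ZMod 2) * h m := hseq_apply_Ico j N out rd k c
    rw [hcoef]
    simp only []
    rw [hhk]
    congr 1
    apply Finset.sum_subset
    · apply Finset.Ico_subset_Ico_left; omega
    · intro m hm hm'
      rw [Finset.mem_Ico] at hm hm'
      have : rd m k = 0 := by
        by_contra hrd
        have := hrd0 m k hrd
        omega
      simp [this]
  have := key (N - i) i le_rfl (by omega)
  rw [← this]
  apply Finset.sum_congr rfl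
  intro k hk
  rw [Finset.mem_range] at hk
  rw [hcoefi k hk]
end Invariant
theorem stmt_14 (i j : ℕ) (M : Matrix (Fin i) (Fin j) (ZMod 2))
    (hrow : ∀ r : Fin i, ∃ c : Fin j, M r c ≠ 0)
    (hcol : ∀ c : Fin j, ∃ r : Fin i, M r c ≠ 0)
    (gates : List (ℕ × ℕ)) (hv : ValidGates i gates)
    (hcomp : ∀ c : Fin j, (fun r : Fin i => M r c) ∈ values i gates) :
    ∃ gates' : List (ℕ × ℕ), ValidGates j gates' ∧
      gates'.length ≤ gates.length + j - i ∧
      ∀ r : Fin i, (fun c : Fin j => M r c) ∈ values j gates' := by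
  classical
  set N := i + gates.length with hN
  set V : ℕ → (Fin i → ZMod 2) := fun k => (values i gates).getD k 0 with hVdef
  set in1 : ℕ → ℕ := fun m => (gates.getD (m - i) (0,0)).1 with hin1
  set in2 : ℕ → ℕ := fun m => (gates.getD (m - i) (0,0)).2 with hin2
  set rd : ℕ → ℕ → ℕ := fun m k => if i ≤ m ∧ m < N then
      (if in1 m = k then 1 else 0) + (if in2 m = k then 1 else 0) else 0 with hrddef
  set out : Fin j → ℕ := fun c => (values i gates).idxOf (fun r => M r c) with houtdef
  have hrd_eq : ∀ m k, rd m k = (if i ≤ m ∧ m < N then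
      (if in1 m = k then 1 else 0) + (if in2 m = k then 1 else 0) else 0) :=
    fun m k => congrFun (congrFun hrddef m) k
  have hvlen : (values i gates).length = N := values_length i gates
  have houtlt : ∀ c, out c < N := by
    intro c
    have : out c = (values i gates).idxOf (fun r => M r c) := congrFun houtdef c
    rw [this, ← hvlen]
    exact List.idxOf_lt_length_iff.mpr (hcomp c)
  have hVout : ∀ c, V (out c) = fun r => M r c := by
    intro c
    show (values i gates).getD (out c) 0 = _
    have hoc : out c = (values i gates).idxOf (fun r => M r c) := congrFun houtdef c
    rw [hoc, List.getD_eq_getElem _ _ (by rw [hvlen, ← hoc]; exact houtlt c), List.getElem_idxOf]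
  have hin_lt : ∀ m, i ≤ m → m < N → in1 m < m ∧ in2 m < m := by
    intro m h1 h2
    have hmi : m - i < gates.length := by omega
    have := hv (m - i) hmi
    have e1 : in1 m = (gates.getD (m - i) (0,0)).1 := congrFun hin1 m
    have e2 : in2 m = (gates.getD (m - i) (0,0)).2 := congrFun hin2 m
    omega
  have hrd0 : ∀ m k, rd m k ≠ 0 → k < m ∧ i ≤ m ∧ m < N := by
    intro m k h
    rw [hrd_eq] at h
    by_cases hc : i ≤ m ∧ m < N
    · rw [if_pos hc] at h
      have hlt := hin_lt m hc.1 hc.2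
      refine ⟨?_, hc.1, hc.2⟩
      by_cases ha : in1 m = k
      · omega
      · by_cases hb : in2 m = k
        · omega
        · rw [if_neg ha, if_neg hb] at h; omega
    · rw [if_neg hc] at h; exact absurd rfl h
  have hVgate : ∀ m, i ≤ m → m < N → V m = ∑ k ∈ Finset.range m, (rd m k : ZMod 2) • V k := by
    intro m h1 h2
    have hmi : m - i < gates.length := by omega
    have hg := values_gate_eq gates hv (m - i) hmi
    have him : i + (m - i) = m := by omega
    rw [him] at hg
    have hVm : V m = V (in1 m) + V (in2 m) := hg
    rw [hVm]
    have hsplit : ∀ k ∈ Finset.range m, (rd m k : ZMod 2) • V k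
        = (if in1 m = k then (1:ZMod 2) else 0) • V k + (if in2 m = k then (1:ZMod 2) else 0) • V k := by
      intro k _
      rw [hrd_eq, if_pos (show i ≤ m ∧ m < N from ⟨h1, h2⟩)]
      simp only [Nat.cast_add, Nat.cast_ite, Nat.cast_one, Nat.cast_zero]
      rw [add_smul]
    rw [Finset.sum_congr rfl hsplit, Finset.sum_add_distrib]
    have hone : ∀ a, a < m → ∑ k ∈ Finset.range m, (if a = k then (1:ZMod 2) else 0) • V k = V a := by
      intro a ha
      rw [Finset.sum_eq_single a]
      · rw [if_pos rfl, one_smul]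
      · intro k _ hk
        rw [if_neg (fun h => hk h.symm), zero_smul]
      · intro habs; exact absurd (Finset.mem_range.mpr ha) habs
    rw [hone _ (hin_lt m h1 h2).1, hone _ (hin_lt m h1 h2).2]
  -- the transposed linear forms
  set hm : ℕ → (Fin j → ZMod 2) := fun k => hseq j N out rd k with hmdef
  set alive : ℕ → Prop := fun k => aliveP j N out rd k with halivedef
  have hm_eq : ∀ k, hm k = hseq j N out rd k := fun k => congrFun hmdef k
  have hrowform : ∀ r : Fin i, hm ↑r = fun c => M r c := by
    intro r
    funext c
    have hinv := invariant j N i out rd V (by omega) (fun m k h => ⟨(hrd0 m k h).1, (hrd0 m k h).2.1⟩)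
      hVgate c (houtlt c)
    have hfr := congr_fun hinv r
    rw [hVout c] at hfr
    rw [Finset.sum_apply] at hfr
    simp only [Pi.smul_apply, smul_eq_mul] at hfr
    show hseq j N out rd ↑r c = M r c
    rw [← hfr]
    rw [Finset.sum_eq_single (r : ℕ)]
    · have hVr : V ↑r = fun t => if t = r then (1:ZMod 2) else 0 := values_getD_input gates r
      rw [hVr]
      simp
    · intro k hk hne
      rw [Finset.mem_range] at hk
      have hVk : V k = fun t => if t = (⟨k, hk⟩ : Fin i) then (1:ZMod 2) else 0 :=
        values_getD_input gates ⟨k, hk⟩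
      rw [hVk]
      have hrk : ¬ (r = (⟨k, hk⟩ : Fin i)) := by
        intro h
        apply hne
        rw [h]
      simp [hrk]
    · intro h
      exact absurd (Finset.mem_range.mpr r.2) h
  have halive_in : ∀ r : Fin i, alive ↑r := by
    intro r
    by_contra hdead
    have h0 : hm ↑r = 0 := hseq_dead j N out rd r (show ¬ aliveP j N out rd ↑r from hdead)
    obtain ⟨c, hc⟩ := hrow r
    have := congr_fun (hrowform r) c
    rw [h0] at this
    exact hc (by rw [← this]; rfl)
  -- counting quantities
  set Acard : ℕ → ℕ := fun K => ∑ k ∈ Finset.range N, if K ≤ k ∧ alive k then 1 else 0 with hAdef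
  set Wcard : ℕ → ℕ := fun K => ∑ c : Fin j, if K ≤ out c then 1 else 0 with hWdef
  set wcount : ℕ → ℕ := fun K => ∑ c : Fin j, if out c = K then 1 else 0 with hwdef
  set Ecard : ℕ → ℕ := fun K => ∑ m ∈ Finset.range N,
      if alive m then (if i ≤ m then
        (if K ≤ in1 m then 1 else 0) + (if K ≤ in2 m then 1 else 0) else 0) else 0 with hEdef
  set dcount : ℕ → ℕ := fun K => ∑ m ∈ Finset.Ico (K+1) N, if alive m then rd m K else 0 with hddef
  have hA_eq : ∀ K, Acard K = ∑ k ∈ Finset.range N, (if K ≤ k ∧ alive k then 1 else 0) :=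
    fun K => congrFun hAdef K
  have hW_eq : ∀ K, Wcard K = ∑ c : Fin j, (if K ≤ out c then 1 else 0) :=
    fun K => congrFun hWdef K
  have hw_eq : ∀ K, wcount K = ∑ c : Fin j, (if out c = K then 1 else 0) :=
    fun K => congrFun hwdef K
  have hE_eq : ∀ K, Ecard K = ∑ m ∈ Finset.range N,
      (if alive m then (if i ≤ m then
        (if K ≤ in1 m then 1 else 0) + (if K ≤ in2 m then 1 else 0) else 0) else 0) :=
    fun K => congrFun hEdef K
  have hd_eq : ∀ K, dcount K = ∑ m ∈ Finset.Ico (K+1) N, (if alive m then rd m K else 0) :=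
    fun K => congrFun hddef K
  have hAstep : ∀ K, K < N → Acard K = Acard (K+1) + (if alive K then 1 else 0) := by
    intro K hK
    rw [hA_eq, hA_eq]
    have hterm : ∀ k ∈ Finset.range N, (if K ≤ k ∧ alive k then 1 else 0) =
        (if K+1 ≤ k ∧ alive k then 1 else 0) + (if k = K then (if alive k then 1 else 0) else 0) := by
      intro k _
      by_cases hal : alive k
      · by_cases hkK : k = K
        · subst hkK
          rw [if_pos ⟨le_rfl, hal⟩, if_neg (fun h => absurd h.1 (by omega)), if_pos rfl,
            if_pos hal]
        · by_cases hKk : K ≤ k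
          · rw [if_pos ⟨hKk, hal⟩, if_pos ⟨by omega, hal⟩, if_neg hkK]
          · rw [if_neg (fun h => hKk h.1), if_neg (fun h => hKk (le_trans (by omega) h.1)),
              if_neg hkK]
      · rw [if_neg (fun h => hal h.2), if_neg (fun h => hal h.2)]
        by_cases hkK : k = K
        · rw [if_pos hkK, if_neg hal]
        · rw [if_neg hkK]
    rw [Finset.sum_congr rfl hterm, Finset.sum_add_distrib]
    congr 1
    rw [Finset.sum_ite_eq' (Finset.range N) K (fun k => if alive k then 1 else 0),
      if_pos (Finset.mem_range.mpr hK)]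
  have hWstep : ∀ K, Wcard K = Wcard (K+1) + wcount K := by
    intro K
    rw [hW_eq, hW_eq, hw_eq]
    rw [← Finset.sum_add_distrib]
    apply Finset.sum_congr rfl
    intro c _
    split_ifs <;> omega
  have hdconv : ∀ K, (∑ m ∈ Finset.range N, if alive m then rd m K else 0) = dcount K := by
    intro K
    rw [hd_eq]
    symm
    apply Finset.sum_subset
    · intro m hmm
      rw [Finset.mem_Ico] at hmm
      exact Finset.mem_range.mpr hmm.2
    · intro m hm1 hm2
      rw [Finset.mem_range] at hm1
      rw [Finset.mem_Ico] at hm2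
      by_cases hrdz : rd m K = 0
      · rw [hrdz]; split_ifs <;> rfl
      · have := hrd0 m K hrdz
        omega
  have hEstep : ∀ K, Ecard K = Ecard (K+1) + dcount K := by
    intro K
    rw [← hdconv K, hE_eq, hE_eq]
    rw [← Finset.sum_add_distrib]
    apply Finset.sum_congr rfl
    intro m hmm
    rw [Finset.mem_range] at hmm
    by_cases hal : alive m
    · rw [if_pos hal, if_pos hal, if_pos hal]
      by_cases hi : i ≤ m
      · rw [if_pos hi, if_pos hi, hrd_eq, if_pos (show i ≤ m ∧ m < N from ⟨hi, hmm⟩)]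
        split_ifs <;> omega
      · rw [if_neg hi, if_neg hi, hrd_eq, if_neg (show ¬(i ≤ m ∧ m < N) from fun h => hi h.1)]
    · rw [if_neg hal, if_neg hal, if_neg hal]
  -- main downward construction
  have main : ∀ d K, K + d = N → ∃ G : List (ℕ × ℕ), ValidGates j G ∧
      (∀ k, K ≤ k → k < N → alive k → hm k ∈ values j G) ∧
      G.length + Acard K = Wcard K + Ecard K := by
    intro d
    induction d with
    | zero =>
      intro K hK
      refine ⟨[], by intro t ht; simp at ht, by intro k h1 h2 _; omega, ?_⟩
      have hA : Acard K = 0 := by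
        rw [hA_eq]
        apply Finset.sum_eq_zero
        intro k hk
        rw [Finset.mem_range] at hk
        rw [if_neg (fun h => by omega)]
      have hW : Wcard K = 0 := by
        rw [hW_eq]
        apply Finset.sum_eq_zero
        intro c _
        have := houtlt c
        rw [if_neg (by omega)]
      have hE : Ecard K = 0 := by
        rw [hE_eq]
        apply Finset.sum_eq_zero
        intro m hmm
        rw [Finset.mem_range] at hmm
        by_cases hal : alive m
        · rw [if_pos hal]
          by_cases hi : i ≤ m
          · rw [if_pos hi]
            have := hin_lt m hi hmm
            rw [if_neg (by omega), if_neg (by omega)]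
            rfl
          · rw [if_neg hi]
        · rw [if_neg hal]
      rw [hA, hW, hE]
      simp
    | succ d ih =>
      intro K hK
      obtain ⟨G, hvG, hmemG, hcntG⟩ := ih (K+1) (by omega)
      have hKN : K < N := by omega
      by_cases hal : alive K
      · -- build the list of terms summing to hm K
        set Lw : List (Fin j → ZMod 2) :=
          ((Finset.univ.filter (fun c : Fin j => out c = K)).toList).map
            (fun c => fun t : Fin j => if t = c then (1 : ZMod 2) else 0) with hLwdef
        set Lr : List (Fin j → ZMod 2) :=
          (((Finset.Ico (K+1) N).filter (fun m => alive m)).toList).flatMap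
            (fun m => List.replicate (rd m K) (hm m)) with hLrdef
        set L := Lw ++ Lr with hLdef
        have hLwsum : Lw.sum = (fun c => if out c = K then (1:ZMod 2) else 0) := by
          rw [hLwdef, Finset.sum_map_toList]
          funext t
          simp only [Finset.sum_apply]
          rw [Finset.sum_ite_eq (Finset.univ.filter (fun c : Fin j => out c = K)) t
            (fun _ => (1 : ZMod 2))]
          by_cases h : out t = K <;> simp [h]
        have hLrsum : Lr.sum = ∑ m ∈ Finset.Ico (K+1) N, (rd m K : ZMod 2) • hm m := by
          rw [hLrdef, sum_flatMap]
          have hcomp2 : (fun a => (List.replicate (rd a K) (hm a)).sum)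
              = fun m => (rd m K) • hm m := by
            funext m
            simp [List.sum_replicate]
          rw [hcomp2, Finset.sum_map_toList]
          rw [Finset.sum_filter]
          apply Finset.sum_congr rfl
          intro m hmm
          rw [Finset.mem_Ico] at hmm
          by_cases hal2 : alive m
          · rw [if_pos hal2, Nat.cast_smul_eq_nsmul]
          · have h0 : hm m = 0 := hseq_dead j N out rd m (show ¬ aliveP j N out rd m from hal2)
            rw [if_neg hal2, h0, smul_zero]
        have hLsum : L.sum = hm K := by
          rw [hLdef, List.sum_append, hLwsum, hLrsum]
          have hK_eq : hm K = (fun c => if out c = K then (1:ZMod 2) else 0) +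
              ∑ m ∈ Finset.Ico (K+1) N, (rd m K : ZMod 2) • hm m := hseq_eq j N out rd K
          rw [hK_eq]
        have hLwlen : Lw.length = wcount K := by
          rw [hLwdef, List.length_map, Finset.length_toList, hw_eq, Finset.card_filter]
        have hLrlen : Lr.length = dcount K := by
          rw [hLrdef, List.length_flatMap, hd_eq]
          have hcomp2 : (fun a => (List.replicate (rd a K) (hm a)).length)
              = fun m => rd m K := by
            funext m; simp
          rw [hcomp2, Finset.sum_map_toList, Finset.sum_filter]
        have hLlen : L.length = wcount K + dcount K := by
          rw [hLdef, List.length_append, hLwlen, hLrlen]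
        have hLpos : 1 ≤ L.length := by
          rw [hLlen]
          have hal' : aliveP j N out rd K := hal
          rw [alive_iff] at hal'
          rcases hal' with ⟨c, hc⟩ | ⟨m, h1, h2, h3, h4⟩
          · have h1w : 1 ≤ wcount K := by
              rw [hw_eq]
              calc 1 = if out c = K then 1 else 0 := by rw [if_pos hc]
              _ ≤ ∑ c' : Fin j, if out c' = K then 1 else 0 :=
                Finset.single_le_sum (f := fun c' => if out c' = K then 1 else 0)
                  (fun c' _ => Nat.zero_le _) (Finset.mem_univ c)
            omega
          · have h1d : 1 ≤ dcount K := by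
              rw [hd_eq]
              have hmem : m ∈ Finset.Ico (K+1) N := Finset.mem_Ico.mpr ⟨by omega, h2⟩
              calc 1 ≤ if alive m then rd m K else 0 := by
                    rw [if_pos (show alive m from h4)]
                    omega
              _ ≤ ∑ m' ∈ Finset.Ico (K+1) N, if alive m' then rd m' K else 0 :=
                Finset.single_le_sum (f := fun m' => if alive m' then rd m' K else 0)
                  (fun m' _ => Nat.zero_le _) hmem
            omega
        have hLmem : ∀ x ∈ L, x ∈ values j G := by
          intro x hx
          rw [hLdef, List.mem_append] at hx
          rcases hx with hx | hx
          · rw [hLwdef, List.mem_map] at hx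
            obtain ⟨c, _, rfl⟩ := hx
            exact e_mem j G c
          · rw [hLrdef, List.mem_flatMap] at hx
            obtain ⟨m, hmm, hxx⟩ := hx
            rw [List.mem_replicate] at hxx
            rw [Finset.mem_toList, Finset.mem_filter, Finset.mem_Ico] at hmm
            rw [hxx.2]
            exact hmemG m hmm.1.1 hmm.1.2 hmm.2
        obtain ⟨extra, hv', hlen', hsum'⟩ := sumExtend (L.length - 1) L G (by omega) hvG hLmem
        refine ⟨G ++ extra, hv', ?_, ?_⟩
        · intro k h1 h2 h3
          rcases eq_or_lt_of_le h1 with rfl | hlt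
          · rw [← hLsum]; exact hsum'
          · exact mem_values_mono (hmemG k hlt h2 h3)
        · rw [List.length_append, hAstep K hKN, hWstep K, hEstep K, if_pos hal]
          omega
      · refine ⟨G, hvG, ?_, ?_⟩
        · intro k h1 h2 h3
          rcases eq_or_lt_of_le h1 with rfl | hlt
          · exact absurd h3 hal
          · exact hmemG k hlt h2 h3
        · have hw0 : wcount K = 0 := by
            rw [hw_eq]
            apply Finset.sum_eq_zero
            intro c _
            rw [if_neg]
            intro hc
            exact hal (show alive K from (alive_iff j N out rd K).mpr (Or.inl ⟨c, hc⟩))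
          have hd0 : dcount K = 0 := by
            rw [hd_eq]
            apply Finset.sum_eq_zero
            intro m hmm
            rw [Finset.mem_Ico] at hmm
            by_cases hal2 : alive m
            · rw [if_pos hal2]
              by_contra hrdz
              apply hal
              show aliveP j N out rd K
              rw [alive_iff]
              exact Or.inr ⟨m, by omega, hmm.2, hrdz, show aliveP j N out rd m from hal2⟩
            · rw [if_neg hal2]
          rw [hAstep K hKN, hWstep K, hEstep K, if_neg hal, hw0, hd0]
          omega
  obtain ⟨G, hvG, hmemG, hcnt⟩ := main N 0 (by omega)
  -- final counting
  set gA : ℕ := ∑ m ∈ Finset.range N, if i ≤ m ∧ alive m then 1 else 0 with hgAdef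
  have hfilter : (Finset.range N).filter (fun k => k < i) = Finset.range i := by
    ext k
    simp only [Finset.mem_filter, Finset.mem_range]
    omega
  have hrangei : (∑ k ∈ Finset.range N, if k < i then 1 else 0) = i := by
    rw [← Finset.card_filter, hfilter, Finset.card_range]
  have hA0 : Acard 0 = i + gA := by
    rw [hA_eq, hgAdef]
    have hterm : ∀ k ∈ Finset.range N, (if 0 ≤ k ∧ alive k then 1 else 0) =
        (if k < i then 1 else 0) + (if i ≤ k ∧ alive k then 1 else 0) := by
      intro k _
      by_cases hki : k < i
      · have hak : alive k := halive_in ⟨k, hki⟩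
        rw [if_pos ⟨Nat.zero_le k, hak⟩, if_pos hki, if_neg (fun h => by omega)]
      · by_cases hak : alive k
        · rw [if_pos ⟨Nat.zero_le k, hak⟩, if_neg hki, if_pos ⟨by omega, hak⟩]
        · rw [if_neg (fun h => hak h.2), if_neg hki, if_neg (fun h => hak h.2)]
    rw [Finset.sum_congr rfl hterm, Finset.sum_add_distrib, hrangei]
  have hW0 : Wcard 0 = j := by
    rw [hW_eq]
    rw [Finset.sum_congr rfl (fun c _ => if_pos (Nat.zero_le _))]
    simp
  have hE0 : Ecard 0 = gA + gA := by
    rw [hE_eq, hgAdef]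
    rw [← Finset.sum_add_distrib]
    apply Finset.sum_congr rfl
    intro m _
    by_cases hal : alive m
    · rw [if_pos hal]
      by_cases hi : i ≤ m
      · rw [if_pos hi, if_pos (show i ≤ m ∧ alive m from ⟨hi, hal⟩),
          if_pos (Nat.zero_le _), if_pos (Nat.zero_le _)]
      · rw [if_neg hi, if_neg (show ¬(i ≤ m ∧ alive m) from fun h => hi h.1)]
    · rw [if_neg hal, if_neg (show ¬(i ≤ m ∧ alive m) from fun h => hal h.2)]
  have hgAle : gA ≤ gates.length := by
    rw [hgAdef]
    have h1 : (∑ m ∈ Finset.range N, if i ≤ m ∧ alive m then 1 else 0)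
        ≤ ∑ m ∈ Finset.range N, if i ≤ m then 1 else 0 := by
      apply Finset.sum_le_sum
      intro m _
      split_ifs with h h2 h2
      · omega
      · exact absurd h.1 h2
      · omega
      · omega
    have h3 : ∀ m ∈ Finset.range N, ((if m < i then 1 else 0) + (if i ≤ m then 1 else 0)) = 1 := by
      intro m _; split_ifs <;> omega
    have h4 := Finset.sum_congr rfl h3
    rw [Finset.sum_add_distrib, hrangei] at h4
    simp only [Finset.sum_const, Finset.card_range, smul_eq_mul, mul_one] at h4
    omega
  refine ⟨G, hvG, ?_, ?_⟩
  · rw [hA0, hW0, hE0] at hcnt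
    omega
  · intro r
    rw [← hrowform r]
    exact hmemG ↑r (Nat.zero_le _) (by have := r.2; omega) (halive_in r)
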